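/- The elliptic curve E₂ : y² + xy + y = x³ − x² + ((−541 + 131√17)/2)x + (3624 − 879√17) over K = Q(√17) has a K-rational point of order 13. -/

import Mathlib

open IntermediateField

private lemma sqrt17_combo_ne (s : ℚ⟮Real.sqrt 17⟯) (hs : (s : ℝ) = Real.sqrt 17)
    (a b : ℚ) (hb : b ≠ 0) :
    ((a : ℚ⟮Real.sqrt 17⟯) + (b : ℚ⟮Real.sqrt 17⟯) * s) ≠ 0 := by
  intro h
  have h' : (a : ℝ) + (b : ℝ) * Real.sqrt 17 = 0 := by
    have h2 := congrArg (fun t : ℚ⟮Real.sqrt 17⟯ => (t : ℝ)) h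
    push_cast at h2
    rwa [hs] at h2
  have hirr : Irrational (Real.sqrt 17) := (by norm_num : Nat.Prime 17).irrational_sqrt
  exact hirr ⟨-a / b, by push_cast; rw [div_eq_iff (by exact_mod_cast hb)]; linarith⟩

private lemma some_congr' {F : Type*} [Field F] {W : WeierstrassCurve.Affine F}
    {x₁ y₁ x₂ y₂ : F} (hx : x₁ = x₂) (hy : y₁ = y₂)
    (h₁ : W.Nonsingular x₁ y₁) (h₂ : W.Nonsingular x₂ y₂) :
    WeierstrassCurve.Affine.Point.some _ _ h₁ = WeierstrassCurve.Affine.Point.some _ _ h₂ := by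
  subst hx; subst hy; rfl

/-- The elliptic curve
`E₂ : y² + xy + y = x³ − x² + ((−541 + 131√17)/2)x + (3624 − 879√17)`
over `K = ℚ(√17)` has a `K`-rational point of order `13`. -/
theorem E2_has_point_of_order_13
    (s : ℚ⟮Real.sqrt 17⟯) (hs : (s : ℝ) = Real.sqrt 17)
    (W : WeierstrassCurve ℚ⟮Real.sqrt 17⟯)
    (hW : W = { a₁ := 1, a₂ := -1, a₃ := 1,
                a₄ := (-541 + 131 * s) / 2, a₆ := 3624 - 879 * s }) :
    ∃ P : W.toAffine.Point, addOrderOf P = 13 := by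
  have hs2 : s ^ 2 = 17 := by
    have h : ((s ^ 2 : ℚ⟮Real.sqrt 17⟯) : ℝ) = ((17 : ℚ⟮Real.sqrt 17⟯) : ℝ) := by
      push_cast
      rw [hs, Real.sq_sqrt (by norm_num)]
      norm_cast
    exact_mod_cast h
  have ha₁ : W.toAffine.a₁ = 1 := by rw [hW]
  have ha₂ : W.toAffine.a₂ = -1 := by rw [hW]
  have ha₃ : W.toAffine.a₃ = 1 := by rw [hW]
  have ha₄ : W.toAffine.a₄ = (-541 + 131 * s) / 2 := by rw [hW]
  have ha₆ : W.toAffine.a₆ = 3624 - 879 * s := by rw [hW]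
  have hΔ : W.toAffine.Δ ≠ 0 := by
    have hΔval : W.toAffine.Δ = -5883863040 + 1427046400 * s := by
      simp only [WeierstrassCurve.Δ, WeierstrassCurve.b₂, WeierstrassCurve.b₄,
        WeierstrassCurve.b₆, WeierstrassCurve.b₈, ha₁, ha₂, ha₃, ha₄, ha₆]
      linear_combination ((-395598591/4 : ℚ⟮Real.sqrt 17⟯) + (-17984728) * s) * hs2
    rw [hΔval]
    intro h
    apply sqrt17_combo_ne s hs (-5883863040) 1427046400 (by norm_num)
    push_cast
    linear_combination h
  have hns1 : W.toAffine.Nonsingular (-12 + 3 * s) ((85 - 21 * s) / 2) := by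
    refine (WeierstrassCurve.Affine.equation_iff_nonsingular_of_Δ_ne_zero (W := W.toAffine) hΔ).mp ?_
    rw [WeierstrassCurve.Affine.equation_iff, ha₁, ha₂, ha₃, ha₄, ha₆]
    linear_combination (((861/4) + (-27) * s : ℚ⟮Real.sqrt 17⟯)) * hs2
  have hns2 : W.toAffine.Nonsingular (62 - 15 * s) ((-1415 + 343 * s) / 2) := by
    refine (WeierstrassCurve.Affine.equation_iff_nonsingular_of_Δ_ne_zero (W := W.toAffine) hΔ).mp ?_
    rw [WeierstrassCurve.Affine.equation_iff, ha₁, ha₂, ha₃, ha₄, ha₆]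
    linear_combination (((-55211/4) + (3375) * s : ℚ⟮Real.sqrt 17⟯)) * hs2
  have hns4 : W.toAffine.Nonsingular (17 - 4 * s) ((-179 + 43 * s) / 2) := by
    refine (WeierstrassCurve.Affine.equation_iff_nonsingular_of_Δ_ne_zero (W := W.toAffine) hΔ).mp ?_
    rw [WeierstrassCurve.Affine.equation_iff, ha₁, ha₂, ha₃, ha₄, ha₆]
    linear_combination (((-647/4) + (64) * s : ℚ⟮Real.sqrt 17⟯)) * hs2
  have hns8 : W.toAffine.Nonsingular (4 - s) ((-63 + 15 * s) / 2) := by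
    refine (WeierstrassCurve.Affine.equation_iff_nonsingular_of_Δ_ne_zero (W := W.toAffine) hΔ).mp ?_
    rw [WeierstrassCurve.Affine.equation_iff, ha₁, ha₂, ha₃, ha₄, ha₆]
    linear_combination (((413/4) + (1) * s : ℚ⟮Real.sqrt 17⟯)) * hs2
  have hns12 : W.toAffine.Nonsingular (-12 + 3 * s) ((-63 + 15 * s) / 2) := by
    refine (WeierstrassCurve.Affine.equation_iff_nonsingular_of_Δ_ne_zero (W := W.toAffine) hΔ).mp ?_
    rw [WeierstrassCurve.Affine.equation_iff, ha₁, ha₂, ha₃, ha₄, ha₆]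
    linear_combination (((861/4) + (-27) * s : ℚ⟮Real.sqrt 17⟯)) * hs2
  let K' := ℚ⟮Real.sqrt 17⟯
  have hy1 : ((85 - 21 * s) / 2) ≠ W.toAffine.negY (-12 + 3 * s) ((85 - 21 * s) / 2) := by
    simp only [WeierstrassCurve.Affine.negY, ha₁, ha₃]
    intro h
    apply sqrt17_combo_ne s hs (74) (-18) (by norm_num)
    push_cast
    linear_combination h
  have hL1 : W.toAffine.slope (-12 + 3 * s) (-12 + 3 * s) ((85 - 21 * s) / 2) ((85 - 21 * s) / 2) = (4 - s) := by
    rw [WeierstrassCurve.Affine.slope_of_Y_ne rfl hy1,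
      div_eq_iff (sub_ne_zero.mpr hy1), WeierstrassCurve.Affine.negY,
      ha₁, ha₂, ha₃, ha₄]
    linear_combination (9 : K') * hs2
  have hX1 : W.toAffine.addX (-12 + 3 * s) (-12 + 3 * s) (W.toAffine.slope (-12 + 3 * s) (-12 + 3 * s) ((85 - 21 * s) / 2) ((85 - 21 * s) / 2)) = (62 - 15 * s) := by
    rw [hL1, WeierstrassCurve.Affine.addX, ha₁, ha₂]
    linear_combination (1 : K') * hs2
  have hY1 : W.toAffine.addY (-12 + 3 * s) (-12 + 3 * s) ((85 - 21 * s) / 2) (W.toAffine.slope (-12 + 3 * s) (-12 + 3 * s) ((85 - 21 * s) / 2) ((85 - 21 * s) / 2)) = ((-1415 + 343 * s) / 2) := by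
    rw [hL1, WeierstrassCurve.Affine.addY, WeierstrassCurve.Affine.negAddY,
      WeierstrassCurve.Affine.negY, WeierstrassCurve.Affine.addX, ha₁, ha₂, ha₃]
    linear_combination ((-23 : K') + s) * hs2
  have hadd2 : WeierstrassCurve.Affine.Point.some _ _ hns1 + WeierstrassCurve.Affine.Point.some _ _ hns1
      = WeierstrassCurve.Affine.Point.some _ _ hns2 := by
    rw [WeierstrassCurve.Affine.Point.add_self_of_Y_ne hy1]
    exact some_congr' hX1 hY1 _ _
  have hy2 : ((-1415 + 343 * s) / 2) ≠ W.toAffine.negY (62 - 15 * s) ((-1415 + 343 * s) / 2) := by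
    simp only [WeierstrassCurve.Affine.negY, ha₁, ha₃]
    intro h
    apply sqrt17_combo_ne s hs (-1352) (328) (by norm_num)
    push_cast
    linear_combination h
  have hL2 : W.toAffine.slope (62 - 15 * s) (62 - 15 * s) ((-1415 + 343 * s) / 2) ((-1415 + 343 * s) / 2) = (-9 + 2 * s) := by
    rw [WeierstrassCurve.Affine.slope_of_Y_ne rfl hy2,
      div_eq_iff (sub_ne_zero.mpr hy2), WeierstrassCurve.Affine.negY,
      ha₁, ha₂, ha₃, ha₄]
    linear_combination (19 : K') * hs2
  have hX2 : W.toAffine.addX (62 - 15 * s) (62 - 15 * s) (W.toAffine.slope (62 - 15 * s) (62 - 15 * s) ((-1415 + 343 * s) / 2) ((-1415 + 343 * s) / 2)) = (17 - 4 * s) := by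
    rw [hL2, WeierstrassCurve.Affine.addX, ha₁, ha₂]
    linear_combination (4 : K') * hs2
  have hY2 : W.toAffine.addY (62 - 15 * s) (62 - 15 * s) ((-1415 + 343 * s) / 2) (W.toAffine.slope (62 - 15 * s) (62 - 15 * s) ((-1415 + 343 * s) / 2) ((-1415 + 343 * s) / 2)) = ((-179 + 43 * s) / 2) := by
    rw [hL2, WeierstrassCurve.Affine.addY, WeierstrassCurve.Affine.negAddY,
      WeierstrassCurve.Affine.negY, WeierstrassCurve.Affine.addX, ha₁, ha₂, ha₃]
    linear_combination ((10 : K') + (-8) * s) * hs2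
  have hadd4 : WeierstrassCurve.Affine.Point.some _ _ hns2 + WeierstrassCurve.Affine.Point.some _ _ hns2
      = WeierstrassCurve.Affine.Point.some _ _ hns4 := by
    rw [WeierstrassCurve.Affine.Point.add_self_of_Y_ne hy2]
    exact some_congr' hX2 hY2 _ _
  have hy4 : ((-179 + 43 * s) / 2) ≠ W.toAffine.negY (17 - 4 * s) ((-179 + 43 * s) / 2) := by
    simp only [WeierstrassCurve.Affine.negY, ha₁, ha₃]
    intro h
    apply sqrt17_combo_ne s hs (-161) (39) (by norm_num)
    push_cast
    linear_combination h
  have hL4 : W.toAffine.slope (17 - 4 * s) (17 - 4 * s) ((-179 + 43 * s) / 2) ((-179 + 43 * s) / 2) = (-5 + s) := by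
    rw [WeierstrassCurve.Affine.slope_of_Y_ne rfl hy4,
      div_eq_iff (sub_ne_zero.mpr hy4), WeierstrassCurve.Affine.negY,
      ha₁, ha₂, ha₃, ha₄]
    linear_combination (9 : K') * hs2
  have hX4 : W.toAffine.addX (17 - 4 * s) (17 - 4 * s) (W.toAffine.slope (17 - 4 * s) (17 - 4 * s) ((-179 + 43 * s) / 2) ((-179 + 43 * s) / 2)) = (4 - s) := by
    rw [hL4, WeierstrassCurve.Affine.addX, ha₁, ha₂]
    linear_combination (1 : K') * hs2
  have hY4 : W.toAffine.addY (17 - 4 * s) (17 - 4 * s) ((-179 + 43 * s) / 2) (W.toAffine.slope (17 - 4 * s) (17 - 4 * s) ((-179 + 43 * s) / 2) ((-179 + 43 * s) / 2)) = ((-63 + 15 * s) / 2) := by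
    rw [hL4, WeierstrassCurve.Affine.addY, WeierstrassCurve.Affine.negAddY,
      WeierstrassCurve.Affine.negY, WeierstrassCurve.Affine.addX, ha₁, ha₂, ha₃]
    linear_combination ((1 : K') + (-1) * s) * hs2
  have hadd8 : WeierstrassCurve.Affine.Point.some _ _ hns4 + WeierstrassCurve.Affine.Point.some _ _ hns4
      = WeierstrassCurve.Affine.Point.some _ _ hns8 := by
    rw [WeierstrassCurve.Affine.Point.add_self_of_Y_ne hy4]
    exact some_congr' hX4 hY4 _ _
  have hxne : (4 - s) ≠ (17 - 4 * s) := by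
    intro h
    apply sqrt17_combo_ne s hs (-13) 3 (by norm_num)
    push_cast
    linear_combination h
  have hL84 : W.toAffine.slope (4 - s) (17 - 4 * s) ((-63 + 15 * s) / 2) ((-179 + 43 * s) / 2) = ((-5 + s) / 2) := by
    rw [WeierstrassCurve.Affine.slope_of_X_ne hxne, div_eq_iff (sub_ne_zero.mpr hxne)]
    linear_combination ((-3/2 : K')) * hs2
  have hX84 : W.toAffine.addX (4 - s) (17 - 4 * s) (W.toAffine.slope (4 - s) (17 - 4 * s) ((-63 + 15 * s) / 2) ((-179 + 43 * s) / 2)) = (-12 + 3 * s) := by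
    rw [hL84, WeierstrassCurve.Affine.addX, ha₁, ha₂]
    linear_combination ((1/4 : K')) * hs2
  have hY84 : W.toAffine.addY (4 - s) (17 - 4 * s) ((-63 + 15 * s) / 2) (W.toAffine.slope (4 - s) (17 - 4 * s) ((-63 + 15 * s) / 2) ((-179 + 43 * s) / 2)) = ((-63 + 15 * s) / 2) := by
    rw [hL84, WeierstrassCurve.Affine.addY, WeierstrassCurve.Affine.negAddY,
      WeierstrassCurve.Affine.negY, WeierstrassCurve.Affine.addX, ha₁, ha₂, ha₃]
    linear_combination ((-13/8 : K') + (-1/8) * s) * hs2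
  have hadd12 : WeierstrassCurve.Affine.Point.some _ _ hns8 + WeierstrassCurve.Affine.Point.some _ _ hns4
      = WeierstrassCurve.Affine.Point.some _ _ hns12 := by
    rw [WeierstrassCurve.Affine.Point.add_of_X_ne hxne]
    exact some_congr' hX84 hY84 _ _
  have hlast : WeierstrassCurve.Affine.Point.some _ _ hns12 + WeierstrassCurve.Affine.Point.some _ _ hns1 = 0 := by
    apply WeierstrassCurve.Affine.Point.add_of_Y_eq rfl
    rw [WeierstrassCurve.Affine.negY, ha₁, ha₃]
    ring
  have e2 : (2 : ℕ) • WeierstrassCurve.Affine.Point.some _ _ hns1 = WeierstrassCurve.Affine.Point.some _ _ hns2 := by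
    rw [two_nsmul, hadd2]
  have e4 : (4 : ℕ) • WeierstrassCurve.Affine.Point.some _ _ hns1 = WeierstrassCurve.Affine.Point.some _ _ hns4 := by
    rw [show (4 : ℕ) = 2 + 2 from rfl, add_nsmul, e2, hadd4]
  have e8 : (8 : ℕ) • WeierstrassCurve.Affine.Point.some _ _ hns1 = WeierstrassCurve.Affine.Point.some _ _ hns8 := by
    rw [show (8 : ℕ) = 4 + 4 from rfl, add_nsmul, e4, hadd8]
  have e13 : (13 : ℕ) • WeierstrassCurve.Affine.Point.some _ _ hns1 = 0 := by
    rw [show (13 : ℕ) = 8 + 4 + 1 from rfl, add_nsmul, add_nsmul, e8, e4, one_nsmul,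
      hadd12, hlast]
  haveI : Fact (Nat.Prime 13) := ⟨by norm_num⟩
  exact ⟨WeierstrassCurve.Affine.Point.some _ _ hns1,
    addOrderOf_eq_prime e13 (WeierstrassCurve.Affine.Point.some_ne_zero hns1)⟩
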